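/- (Non-Cylindrical Maximum Principle, scalar version) Let T > 0 and let V be a nonempty open subset of ℝ × (0,T) whose closure V̄ is compact. Define the parabolic boundary Γ_V := (V̄ \ V) \ (ℝ × {T}). Let f : ℝ × ℝ → ℝ be continuous on V̄, and suppose that at every point (x,t) ∈ V the partial derivatives ∂ₜf, ∂ₓf, ∂ₓₓf exist and satisfy ∂ₜf(x,t) − ∂ₓₓf(x,t) ≤ α(x,t)·∂ₓf(x,t) for some function α : ℝ × ℝ → ℝ that is continuous on V. Then sup_V f ≤ sup_{Γ_V} f. -/

import Mathlib

open Set Real Filter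

/-- If `h` has derivative `d` at `a` and `h t ≤ h a` for `t` slightly to the left of `a`,
then `d ≥ 0`. -/
lemma deriv_nonneg_of_left_max {h : ℝ → ℝ} {a d : ℝ} (hd : HasDerivAt h d a)
    (H : ∀ᶠ t in nhdsWithin a (Iio a), h t ≤ h a) : 0 ≤ d := by
  have hslope : Tendsto (slope h a) (nhdsWithin a (Iio a)) (nhds d) :=
    (hasDerivAt_iff_tendsto_slope.mp hd).mono_left
      (nhdsWithin_mono a fun t ht => ne_of_lt ht)
  refine ge_of_tendsto hslope ?_
  filter_upwards [H, self_mem_nhdsWithin] with t ht ht'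
  have hta : t < a := ht'
  rw [slope_def_field]
  exact div_nonneg_iff.mpr (Or.inr ⟨by linarith, by linarith⟩)

/-- Second derivative test: if `u` has a max at `a` on an interval, `u' = v`, `v a = 0`,
and `v` has derivative `c` at `a`, then `c ≤ 0`. -/
lemma second_deriv_test {u v : ℝ → ℝ} {a r c : ℝ} (hr : 0 < r)
    (hu : ∀ x ∈ Ioo (a - r) (a + r), HasDerivAt u (v x) x)
    (hv : HasDerivAt v c a) (hva : v a = 0)
    (hmax : ∀ x ∈ Ioo (a - r) (a + r), u x ≤ u a) : c ≤ 0 := by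
  by_contra hc
  push_neg at hc
  have hslope : Tendsto (slope v a) (nhdsWithin a (Ioi a)) (nhds c) :=
    (hasDerivAt_iff_tendsto_slope.mp hv).mono_left
      (nhdsWithin_mono a fun t ht => ne_of_gt ht)
  have hev : ∀ᶠ t in nhdsWithin a (Ioi a), 0 < v t := by
    filter_upwards [hslope.eventually (eventually_gt_nhds hc), self_mem_nhdsWithin]
      with t ht ht'
    have hta : a < t := ht'
    rw [slope_def_field, hva, sub_zero] at ht
    have := mul_pos ht (sub_pos.mpr hta)
    rwa [div_mul_cancel₀ _ (by linarith : t - a ≠ 0)] at this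
  obtain ⟨b, hb, hsub⟩ := mem_nhdsGT_iff_exists_Ioo_subset.mp hev
  have hb' : a < min b (a + r) := lt_min hb (by linarith)
  set m := (a + min b (a + r)) / 2 with hm
  have ham : a < m := by simp only [hm]; linarith
  have hmb : m < min b (a + r) := by simp only [hm]; linarith
  have hsub2 : Icc a m ⊆ Ioo (a - r) (a + r) := by
    intro x hx
    constructor
    · linarith [hx.1]
    · exact lt_of_le_of_lt hx.2 (lt_of_lt_of_le hmb (min_le_right _ _))
  have hcont : ContinuousOn u (Icc a m) := fun x hx =>
    ((hu x (hsub2 hx)).continuousAt).continuousWithinAt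
  have hderivpos : ∀ x ∈ interior (Icc a m), 0 < deriv u x := by
    intro x hx
    rw [interior_Icc] at hx
    have hxI : x ∈ Ioo (a - r) (a + r) := hsub2 ⟨hx.1.le, hx.2.le⟩
    rw [(hu x hxI).deriv]
    exact hsub ⟨hx.1, lt_of_lt_of_le (lt_trans hx.2 hmb) (min_le_left _ _)⟩
  have hmono := strictMonoOn_of_deriv_pos (convex_Icc a m) hcont hderivpos
  have hlt : u a < u m :=
    hmono (left_mem_Icc.mpr ham.le) (right_mem_Icc.mpr ham.le) ham
  exact absurd (hmax m (hsub2 (right_mem_Icc.mpr ham.le))) (not_le.mpr hlt)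

/-- Non-Cylindrical Maximum Principle, scalar version. -/
theorem noncylindrical_maximum_principle (T : ℝ) (hT : 0 < T)
    (V : Set (ℝ × ℝ)) (hVopen : IsOpen V) (hVne : V.Nonempty)
    (hVsub : V ⊆ (univ : Set ℝ) ×ˢ Ioo (0 : ℝ) T)
    (hVcpt : IsCompact (closure V))
    (f ft fx fxx α : ℝ × ℝ → ℝ)
    (hf : ContinuousOn f (closure V))
    (hα : ContinuousOn α V)
    (hderiv : ∀ p ∈ V,
      HasDerivAt (fun t => f (p.1, t)) (ft p) p.2 ∧
      HasDerivAt (fun x => f (x, p.2)) (fx p) p.1 ∧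
      HasDerivAt (fun x => fx (x, p.2)) (fxx p) p.1 ∧
      ft p - fxx p ≤ α p * fx p) :
    sSup (f '' V) ≤ sSup (f '' ((closure V \ V) \ {q : ℝ × ℝ | q.2 = T})) := by
  set Γ := ((closure V \ V) \ {q : ℝ × ℝ | q.2 = T}) with hΓdef
  -- the closure lies in the slab [0, T]
  have hclsub : closure V ⊆ (univ : Set ℝ) ×ˢ Icc (0 : ℝ) T := by
    have h1 : closure V ⊆ closure ((univ : Set ℝ) ×ˢ Ioo (0 : ℝ) T) := closure_mono hVsub
    refine h1.trans ?_
    rw [closure_prod_eq, closure_univ, closure_Ioo hT.ne]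
  -- Γ is nonempty (take a point of minimal time)
  have hΓne : Γ.Nonempty := by
    obtain ⟨q, hqcl, hqmin⟩ :=
      hVcpt.exists_isMinOn hVne.closure (continuous_snd.continuousOn)
    obtain ⟨p0, hp0⟩ := hVne
    have hq2T : q.2 < T := lt_of_le_of_lt (hqmin (subset_closure hp0)) ((hVsub hp0).2.2
      )
    have hqnV : q ∉ V := by
      intro hqV
      obtain ⟨r, hr, hball⟩ := Metric.isOpen_iff.mp hVopen q hqV
      have hmem : ((q.1, q.2 - r / 2) : ℝ × ℝ) ∈ Metric.ball q r := by
        rw [Metric.mem_ball, Prod.dist_eq, dist_self, Real.dist_eq]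
        rw [show q.2 - r / 2 - q.2 = -(r / 2) by ring, abs_neg,
          abs_of_nonneg (by linarith)]
        rw [sup_eq_right.mpr (by linarith : (0 : ℝ) ≤ r / 2)]
        linarith
      have := hqmin (subset_closure (hball hmem))
      simp only [IsMinOn] at this
      have h2 : q.2 ≤ q.2 - r / 2 := this
      linarith
    exact ⟨q, ⟨hqcl, hqnV⟩, by simp [hΓdef, ne_of_lt hq2T]⟩
  have hΓsub : Γ ⊆ closure V := fun x hx => hx.1.1
  have hbdd : BddAbove (f '' Γ) :=
    BddAbove.mono (image_mono (f := f) hΓsub) (hVcpt.image_of_continuousOn hf).bddAbove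
  -- the key pointwise estimate
  have key : ∀ p ∈ V, f p ≤ sSup (f '' Γ) := by
    intro p hp
    have hp2 : p.2 ∈ Ioo (0 : ℝ) T := (hVsub hp).2
    have hε : ∀ ε : ℝ, 0 < ε → f p ≤ sSup (f '' Γ) + ε * T := by
      intro ε hε
      set s := (p.2 + T) / 2 with hs
      have hs1 : p.2 < s := by simp only [hs]; linarith [hp2.2]
      have hs2 : s < T := by simp only [hs]; linarith [hp2.2]
      set K := closure V ∩ {q : ℝ × ℝ | q.2 ≤ s} with hK
      have hKc : IsCompact K :=
        hVcpt.inter_right (isClosed_le continuous_snd continuous_const)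
      have hpK : p ∈ K := ⟨subset_closure hp, hs1.le⟩
      set g : ℝ × ℝ → ℝ := fun q => f q - ε * q.2 with hg
      have hgc : ContinuousOn g K :=
        (hf.mono inter_subset_left).sub
          ((continuous_const.mul continuous_snd).continuousOn)
      obtain ⟨q, hqK, hqmax⟩ := hKc.exists_isMaxOn ⟨p, hpK⟩ hgc
      by_cases hqV : q ∈ V
      · exfalso
        obtain ⟨ht, hx, hxx, hineq⟩ := hderiv q hqV
        obtain ⟨r, hr, hball⟩ := Metric.isOpen_iff.mp hVopen q hqV
        have hmemx : ∀ x : ℝ, |x - q.1| < r → ((x, q.2) : ℝ × ℝ) ∈ V := by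
          intro x hx'
          apply hball
          rw [Metric.mem_ball, Prod.dist_eq]
          simp [Real.dist_eq, hx', hr]
        have hmemt : ∀ t : ℝ, |t - q.2| < r → ((q.1, t) : ℝ × ℝ) ∈ V := by
          intro t ht'
          apply hball
          rw [Metric.mem_ball, Prod.dist_eq]
          simp [Real.dist_eq, ht', hr]
        -- spatial comparison: slice points are in K and dominated by g q
        have hsliceK : ∀ x : ℝ, |x - q.1| < r → f (x, q.2) ≤ f q := by
          intro x hx'
          have hxK : ((x, q.2) : ℝ × ℝ) ∈ K :=
            ⟨subset_closure (hmemx x hx'), hqK.2⟩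
          have := hqmax hxK
          simp only [hg] at this
          have h2 : f (x, q.2) - ε * q.2 ≤ f q - ε * q.2 := this
          linarith
        -- fx q = 0
        have hfx0 : fx q = 0 := by
          have hlm : IsLocalMax (fun x => f (x, q.2)) q.1 := by
            filter_upwards [Metric.ball_mem_nhds q.1 hr] with x hx'
            exact hsliceK x (by simpa [Real.dist_eq] using hx')
          exact hlm.hasDerivAt_eq_zero hx
        -- fxx q ≤ 0
        have hfxx : fxx q ≤ 0 := by
          refine second_deriv_test (u := fun x => f (x, q.2)) (v := fun x => fx (x, q.2))
            hr ?_ hxx (by simpa using hfx0) ?_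
          · intro x hx'
            have hxV : ((x, q.2) : ℝ × ℝ) ∈ V := by
              apply hmemx
              rw [abs_sub_lt_iff]
              constructor <;> [linarith [hx'.2]; linarith [hx'.1]]
            exact (hderiv (x, q.2) hxV).2.1
          · intro x hx'
            refine hsliceK x ?_
            rw [abs_sub_lt_iff]
            constructor <;> [linarith [hx'.2]; linarith [hx'.1]]
        -- ft q ≥ ε
        have hft : ε ≤ ft q := by
          have hεt : HasDerivAt (fun t : ℝ => ε * t) ε q.2 := by
            simpa using (hasDerivAt_id q.2).const_mul ε
          have hd : HasDerivAt (fun t => f (q.1, t) - ε * t) (ft q - ε) q.2 := ht.sub hεt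
          have h0 : 0 ≤ ft q - ε := by
            refine deriv_nonneg_of_left_max hd ?_
            filter_upwards [Ioo_mem_nhdsLT_of_mem
              (⟨by linarith, le_refl q.2⟩ : q.2 ∈ Ioc (q.2 - r) q.2)] with t ht'
            have htV : ((q.1, t) : ℝ × ℝ) ∈ V := by
              apply hmemt
              rw [abs_sub_lt_iff]
              constructor <;> [linarith [ht'.2]; linarith [ht'.1]]
            have htK : ((q.1, t) : ℝ × ℝ) ∈ K :=
              ⟨subset_closure htV, le_trans ht'.2.le hqK.2⟩
            have := hqmax htK
            simp only [hg] at this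
            have h2 : f (q.1, t) - ε * t ≤ f q - ε * q.2 := this
            linarith
          linarith
        rw [hfx0, mul_zero] at hineq
        linarith
      · -- max on the parabolic boundary
        have hq2s : q.2 ≤ s := hqK.2
        have hqΓ : q ∈ Γ :=
          ⟨⟨hqK.1, hqV⟩, by simp [hΓdef]; exact ne_of_lt (lt_of_le_of_lt hq2s hs2)⟩
        have h1 : f q ≤ sSup (f '' Γ) := le_csSup hbdd ⟨q, hqΓ, rfl⟩
        have h2 := hqmax hpK
        simp only [hg] at h2
        have h2' : f p - ε * p.2 ≤ f q - ε * q.2 := h2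
        have hq20 : 0 ≤ q.2 := (hclsub hqK.1).2.1
        have hp2T : p.2 ≤ T := hp2.2.le
        have h3 : ε * p.2 ≤ ε * T := mul_le_mul_of_nonneg_left hp2T hε.le
        have h4 : 0 ≤ ε * q.2 := mul_nonneg hε.le hq20
        linarith
    refine le_of_forall_pos_le_add ?_
    intro δ hδ
    have h := hε (δ / T) (div_pos hδ hT)
    rwa [div_mul_cancel₀ _ hT.ne'] at h
  refine csSup_le (hVne.image f) ?_
  rintro y ⟨p, hp, rfl⟩
  exact key p hp
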